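/- For every integer n ≥ 0: in Thompson's group F, |x_0^n|_{S_F} = n and |x_1^n|_{S_F} = n where S_F = {x_0, x_1}; and in Thompson's group T, |φ(x_0)^n|_{S_T} = n and |φ(x_1)^n|_{S_T} = n where S_T = {x_0, x_1, c_0}. -/

import Mathlib

/-- Relators of the standard infinite presentation of Thompson's group `T`,
on generators `Sum.inl i ↦ x_i` and `Sum.inr i ↦ c_i`. -/
def TRel : Set (FreeGroup (ℕ ⊕ ℕ)) :=
  { r | (∃ i j : ℕ, i < j ∧
        r = FreeGroup.of (Sum.inl j) * FreeGroup.of (Sum.inl i) *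
            (FreeGroup.of (Sum.inl i) * FreeGroup.of (Sum.inl (j + 1)))⁻¹) ∨
    (∃ k n : ℕ, k < n ∧
        r = FreeGroup.of (Sum.inl k) * FreeGroup.of (Sum.inr (n + 1)) *
            (FreeGroup.of (Sum.inr n) * FreeGroup.of (Sum.inl (k + 1)))⁻¹) ∨
    (∃ n : ℕ, r = FreeGroup.of (Sum.inr n) * FreeGroup.of (Sum.inl 0) *
            ((FreeGroup.of (Sum.inr (n + 1))) ^ 2)⁻¹) ∨
    (∃ n : ℕ, r = FreeGroup.of (Sum.inr n) *
            (FreeGroup.of (Sum.inl n) * FreeGroup.of (Sum.inr (n + 1)))⁻¹) ∨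
    (∃ n : ℕ, r = (FreeGroup.of (Sum.inr n)) ^ (n + 2)) }

/-- Thompson's group `T`. -/
abbrev ThompsonT : Type := PresentedGroup TRel

/-- The generator `x_i` of `T`. -/
def x (i : ℕ) : ThompsonT := PresentedGroup.of (Sum.inl i)

/-- The torsion generator `c_i` of `T`. -/
def c (i : ℕ) : ThompsonT := PresentedGroup.of (Sum.inr i)

/-- Relators of the standard infinite presentation of Thompson's group `F`. -/
def FRel : Set (FreeGroup ℕ) :=
  { r | ∃ i j : ℕ, i < j ∧
      r = FreeGroup.of j * FreeGroup.of i * (FreeGroup.of i * FreeGroup.of (j + 1))⁻¹ }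

/-- Thompson's group `F`. -/
abbrev ThompsonF : Type := PresentedGroup FRel

/-- The generator `x_i` of `F`. -/
def xF (i : ℕ) : ThompsonF := PresentedGroup.of i

/-- The word length of `g` with respect to a generating set `S`: the least `n` such
that `g` is a product of `n` elements of `S ∪ S⁻¹`. -/
noncomputable def wordLength {G : Type*} [Group G] (S : Set G) (g : G) : ℕ :=
  sInf {n : ℕ | ∃ w : List G, w.length = n ∧ (∀ a ∈ w, a ∈ S ∨ a⁻¹ ∈ S) ∧ w.prod = g}


/-! ### Streams of booleans -/

def BS : Type := ℕ → Bool

def bcons (b : Bool) (s : BS) : BS := fun n => Nat.casesOn n b s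

@[simp] lemma bcons_zero (b : Bool) (s : BS) : bcons b s 0 = b := rfl
@[simp] lemma bcons_succ (b : Bool) (s : BS) (n : ℕ) : bcons b s (n+1) = s n := rfl

lemma bcons_eta (s : BS) : bcons (s 0) (fun n => s (n+1)) = s := by
  funext n; cases n <;> rfl

lemma exists_bcons (s : BS) : ∃ b t, s = bcons b t :=
  ⟨_, _, (bcons_eta s).symm⟩

/-- `ones k w` prepends `k` trues. -/
def ones : ℕ → BS → BS
  | 0, s => s
  | k+1, s => bcons true (ones k s)

@[simp] lemma ones_zero (s : BS) : ones 0 s = s := rfl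
@[simp] lemma ones_succ (k : ℕ) (s : BS) : ones (k+1) s = bcons true (ones k s) := rfl

lemma ones_add (a b : ℕ) (s : BS) : ones (a+b) s = ones a (ones b s) := by
  induction a with
  | zero => simp
  | succ a ih => rw [Nat.succ_add]; simp [ih]

/-! ### The permutation X0 and the lift operation -/

def X0fun (s : BS) : BS :=
  match s 0, s 1 with
  | false, _ => bcons false s
  | true, false => bcons false (bcons true (fun n => s (n+2)))
  | true, true => fun n => s (n+1)

def X0invfun (s : BS) : BS :=
  match s 0, s 1 with
  | true, _ => bcons true (bcons true (fun n => s (n+1)))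
  | false, true => bcons true (bcons false (fun n => s (n+2)))
  | false, false => fun n => s (n+1)

def X0 : Equiv.Perm BS where
  toFun := X0fun
  invFun := X0invfun
  left_inv := by
    intro s
    obtain ⟨b, t, rfl⟩ := exists_bcons s
    obtain ⟨b2, t2, rfl⟩ := exists_bcons t
    cases b <;> cases b2 <;> rfl
  right_inv := by
    intro s
    obtain ⟨b, t, rfl⟩ := exists_bcons s
    obtain ⟨b2, t2, rfl⟩ := exists_bcons t
    cases b <;> cases b2 <;> rfl

@[simp] lemma X0_c0 (w : BS) : X0 (bcons false w) = bcons false (bcons false w) := by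
  obtain ⟨b, t, rfl⟩ := exists_bcons w; cases b <;> rfl
@[simp] lemma X0_c1c0 (w : BS) : X0 (bcons true (bcons false w)) = bcons false (bcons true w) := rfl
@[simp] lemma X0_c1c1 (w : BS) : X0 (bcons true (bcons true w)) = bcons true w := rfl
@[simp] lemma X0inv_c1 (w : BS) : X0⁻¹ (bcons true w) = bcons true (bcons true w) := by
  obtain ⟨b, t, rfl⟩ := exists_bcons w; cases b <;> rfl
@[simp] lemma X0inv_c0c1 (w : BS) : X0⁻¹ (bcons false (bcons true w)) = bcons true (bcons false w) := rfl
@[simp] lemma X0inv_c0c0 (w : BS) : X0⁻¹ (bcons false (bcons false w)) = bcons false w := rfl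

lemma X0_ones (m : ℕ) (w : BS) : X0 (ones (m+2) w) = ones (m+1) w := by
  simp [ones_succ]

/-! ### lift -/

def liftFun (f : BS → BS) (s : BS) : BS :=
  match s 0 with
  | true => bcons true (f (fun n => s (n+1)))
  | false => s

def liftPerm (e : Equiv.Perm BS) : Equiv.Perm BS where
  toFun := liftFun e
  invFun := liftFun e.symm
  left_inv := by
    intro s
    obtain ⟨b, t, rfl⟩ := exists_bcons s
    cases b
    · rfl
    · show liftFun e.symm (bcons true (e t)) = bcons true t
      show bcons true (e.symm (e t)) = bcons true t
      rw [Equiv.symm_apply_apply]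
  right_inv := by
    intro s
    obtain ⟨b, t, rfl⟩ := exists_bcons s
    cases b
    · rfl
    · show liftFun e (bcons true (e.symm t)) = bcons true t
      show bcons true (e (e.symm t)) = bcons true t
      rw [Equiv.apply_symm_apply]

@[simp] lemma liftPerm_c1 (e : Equiv.Perm BS) (w : BS) :
    liftPerm e (bcons true w) = bcons true (e w) := rfl
@[simp] lemma liftPerm_c0 (e : Equiv.Perm BS) (w : BS) :
    liftPerm e (bcons false w) = bcons false w := rfl

lemma liftPerm_mul (a b : Equiv.Perm BS) : liftPerm (a * b) = liftPerm a * liftPerm b := by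
  apply Equiv.ext; intro s
  obtain ⟨bb, t, rfl⟩ := exists_bcons s
  cases bb <;> simp [Equiv.Perm.mul_apply]

lemma liftPerm_one : liftPerm 1 = 1 := by
  apply Equiv.ext; intro s
  obtain ⟨bb, t, rfl⟩ := exists_bcons s
  cases bb <;> simp

lemma liftPerm_inv (e : Equiv.Perm BS) : (liftPerm e)⁻¹ = liftPerm e⁻¹ := rfl

lemma liftPerm_pow (e : Equiv.Perm BS) (n : ℕ) : (liftPerm e) ^ n = liftPerm (e ^ n) := by
  induction n with
  | zero => simp [liftPerm_one]
  | succ n ih => rw [pow_succ, pow_succ, liftPerm_mul, ih]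
/-! ### The generators xp and cp -/

def lnPerm : ℕ → Equiv.Perm BS → Equiv.Perm BS
  | 0, e => e
  | i+1, e => liftPerm (lnPerm i e)

lemma lnPerm_inv (i : ℕ) (e : Equiv.Perm BS) : (lnPerm i e)⁻¹ = lnPerm i e⁻¹ := by
  induction i with
  | zero => rfl
  | succ i ih => show (liftPerm _)⁻¹ = _; rw [liftPerm_inv, ih]; rfl

lemma lnPerm_ones (i : ℕ) (e : Equiv.Perm BS) (w : BS) :
    lnPerm i e (ones i w) = ones i (e w) := by
  induction i with
  | zero => rfl
  | succ i ih => show liftPerm _ (bcons true (ones i w)) = _; rw [liftPerm_c1, ih]; rfl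

lemma lnPerm_fix (i k : ℕ) (hk : k < i) (e : Equiv.Perm BS) (w : BS) :
    lnPerm i e (ones k (bcons false w)) = ones k (bcons false w) := by
  induction i generalizing k with
  | zero => omega
  | succ i ih =>
    cases k with
    | zero => exact liftPerm_c0 _ _
    | succ k =>
      show liftPerm _ (bcons true (ones k (bcons false w))) = _
      rw [liftPerm_c1, ih k (by omega)]
      rfl

def xp (i : ℕ) : Equiv.Perm BS := lnPerm i X0

def C0 : Equiv.Perm BS where
  toFun s := bcons (!(s 0)) (fun n => s (n+1))
  invFun s := bcons (!(s 0)) (fun n => s (n+1))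
  left_inv := by
    intro s
    obtain ⟨b, t, rfl⟩ := exists_bcons s
    cases b <;> rfl
  right_inv := by
    intro s
    obtain ⟨b, t, rfl⟩ := exists_bcons s
    cases b <;> rfl

@[simp] lemma C0_c0 (w : BS) : C0 (bcons false w) = bcons true w := rfl
@[simp] lemma C0_c1 (w : BS) : C0 (bcons true w) = bcons false w := rfl

def cp : ℕ → Equiv.Perm BS
  | 0 => C0
  | n+1 => (xp n)⁻¹ * cp n

lemma xp_succ (i : ℕ) : xp (i+1) = liftPerm (xp i) := rfl

lemma xp_ones (i : ℕ) (w : BS) : xp i (ones i w) = ones i (X0 w) := lnPerm_ones i X0 w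

lemma xp_inv_ones (i : ℕ) (w : BS) : (xp i)⁻¹ (ones i w) = ones i (X0⁻¹ w) := by
  rw [xp, lnPerm_inv]; exact lnPerm_ones i X0⁻¹ w

lemma xp_fix (i k : ℕ) (hk : k < i) (w : BS) :
    xp i (ones k (bcons false w)) = ones k (bcons false w) := lnPerm_fix i k hk X0 w

lemma xp_inv_fix (i k : ℕ) (hk : k < i) (w : BS) :
    (xp i)⁻¹ (ones k (bcons false w)) = ones k (bcons false w) := by
  rw [xp, lnPerm_inv]; exact lnPerm_fix i k hk X0⁻¹ w

/-! ### Closed form for cp -/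

lemma cp_spec (n : ℕ) :
    (∀ w, cp n (bcons false w) = ones (n+1) w) ∧
    (∀ k w, k < n → cp n (ones (k+1) (bcons false w)) = ones k (bcons false w)) ∧
    (∀ w, cp n (ones (n+1) w) = ones n (bcons false w)) := by
  induction n with
  | zero =>
    refine ⟨fun w => rfl, fun k w hk => absurd hk (Nat.not_lt_zero k), fun w => ?_⟩
    show C0 (bcons true w) = bcons false w
    simp
  | succ n ih =>
    obtain ⟨ha, hb, hc⟩ := ih
    have key : ∀ s, cp (n+1) s = (xp n)⁻¹ (cp n s) := fun s => rfl
    refine ⟨fun w => ?_, fun k w hk => ?_, fun w => ?_⟩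
    · rw [key, ha]
      have : ones (n+1+1) w = ones n (bcons true (bcons true w)) := by
        have : n+1+1 = n + 2 := rfl
        rw [this, ones_add]; rfl
      rw [show ones (n+1) w = ones n (bcons true w) by rw [show n+1 = n+1 from rfl, ones_add n 1]; rfl]
      rw [xp_inv_ones, X0inv_c1, this]
    · rcases Nat.lt_or_ge k n with h | h
      · rw [key, hb k w h, xp_inv_fix n k h]
      · have hkn : k = n := by omega
        subst hkn
        rw [key, hc (bcons false w), xp_inv_ones, X0inv_c0c0]
    · rw [key]
      have h1 : ones (n+1+1) w = ones (n+1) (bcons true w) := by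
        rw [show n+1+1 = (n+1)+1 from rfl, ones_add (n+1) 1]; rfl
      rw [h1, hc (bcons true w), xp_inv_ones, X0inv_c0c1]
      rw [show n+1 = n+1 from rfl, ones_add n 1]; rfl

lemma cp_a (n : ℕ) (w : BS) : cp n (bcons false w) = ones (n+1) w := (cp_spec n).1 w
lemma cp_b (n k : ℕ) (hk : k < n) (w : BS) :
    cp n (ones (k+1) (bcons false w)) = ones k (bcons false w) := (cp_spec n).2.1 k w hk
lemma cp_c (n : ℕ) (w : BS) : cp n (ones (n+1) w) = ones n (bcons false w) := (cp_spec n).2.2 w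

/-! ### Case split -/

lemma caseSplit (n : ℕ) (s : BS) :
    (∃ k w, k ≤ n ∧ s = ones k (bcons false w)) ∨ (∃ w, s = ones (n+1) w) := by
  induction n with
  | zero =>
    obtain ⟨b, t, rfl⟩ := exists_bcons s
    cases b
    · exact Or.inl ⟨0, t, le_refl 0, rfl⟩
    · exact Or.inr ⟨t, rfl⟩
  | succ n ih =>
    rcases ih with ⟨k, w, hk, rfl⟩ | ⟨w, rfl⟩
    · exact Or.inl ⟨k, w, by omega, rfl⟩
    · obtain ⟨b, t, rfl⟩ := exists_bcons w
      cases b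
      · exact Or.inl ⟨n+1, t, le_refl _, rfl⟩
      · refine Or.inr ⟨t, ?_⟩
        rw [ones_add (n+1) 1]; rfl
/-! ### Relator verification -/

lemma conj_key (e : Equiv.Perm BS) : X0⁻¹ * liftPerm e * X0 = liftPerm (liftPerm e) := by
  apply Equiv.ext; intro s
  obtain ⟨b, t, rfl⟩ := exists_bcons s
  simp only [Equiv.Perm.mul_apply]
  cases b
  · rw [X0_c0, liftPerm_c0, X0inv_c0c0, liftPerm_c0]
  · obtain ⟨b2, t2, rfl⟩ := exists_bcons t
    cases b2
    · rw [X0_c1c0, liftPerm_c0, X0inv_c0c1, liftPerm_c1, liftPerm_c0]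
    · rw [X0_c1c1, liftPerm_c1, X0inv_c1, liftPerm_c1, liftPerm_c1]

lemma rel1_conj : ∀ i j, i < j → (xp i)⁻¹ * xp j * xp i = xp (j+1) := by
  intro i
  induction i with
  | zero =>
    intro j hj
    obtain ⟨m, rfl⟩ : ∃ m, j = m + 1 := ⟨j - 1, by omega⟩
    show X0⁻¹ * liftPerm (xp m) * X0 = xp (m+2)
    rw [conj_key]; rfl
  | succ i ih =>
    intro j hj
    obtain ⟨m, rfl⟩ : ∃ m, j = m + 1 := ⟨j - 1, by omega⟩
    show (liftPerm (xp i))⁻¹ * liftPerm (xp m) * liftPerm (xp i) = liftPerm (xp (m+1))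
    rw [liftPerm_inv, ← liftPerm_mul, ← liftPerm_mul, ← ih m (by omega)]

lemma rel1 (i j : ℕ) (hij : i < j) : xp j * xp i = xp i * xp (j+1) := by
  have h := rel1_conj i j hij
  calc xp j * xp i = xp i * ((xp i)⁻¹ * xp j * xp i) := by group
  _ = xp i * xp (j+1) := by rw [h]

-- convenience
lemma ones_one (w : BS) : ones 1 w = bcons true w := rfl

lemma cp_b' (n k : ℕ) (hk1 : 1 ≤ k) (hk2 : k ≤ n) (w : BS) :
    cp n (ones k (bcons false w)) = ones (k-1) (bcons false w) := by
  obtain ⟨j, rfl⟩ : ∃ j, k = j + 1 := ⟨k - 1, by omega⟩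
  rw [cp_b n j (by omega)]; congr 1

lemma xp_fix' (i k : ℕ) (hk : k < i) (w : BS) :
    xp i (ones k (bcons false w)) = ones k (bcons false w) := xp_fix i k hk w

lemma rel3 (n : ℕ) : cp n * xp 0 = cp (n+1) * cp (n+1) := by
  apply Equiv.ext; intro s
  simp only [Equiv.Perm.mul_apply]
  have hx0 : xp 0 = X0 := rfl
  rcases caseSplit (n+1) s with ⟨j, w, hj, rfl⟩ | ⟨w, rfl⟩
  · match j, hj with
    | 0, _ =>
      have L : cp n (xp 0 (ones 0 (bcons false w))) = ones (n+1) (bcons false w) := by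
        rw [ones_zero, hx0, X0_c0, cp_a]
      have R : cp (n+1) (cp (n+1) (ones 0 (bcons false w))) = ones (n+1) (bcons false w) := by
        rw [ones_zero, cp_a, show (n:ℕ)+1+1 = (n+1)+1 from rfl, cp_c]
      rw [L, R]
    | 1, _ =>
      have L : cp n (xp 0 (ones 1 (bcons false w))) = ones (n+1) (bcons true w) := by
        rw [ones_one, hx0, X0_c1c0, cp_a]
      have R : cp (n+1) (cp (n+1) (ones 1 (bcons false w))) = ones (n+1) (bcons true w) := by
        rw [cp_b (n+1) 0 (by omega), ones_zero, cp_a, ones_add (n+1) 1, ones_one]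
      rw [L, R]
    | (d+2), hj =>
      have L : cp n (xp 0 (ones (d+2) (bcons false w))) = ones d (bcons false w) := by
        rw [hx0, X0_ones d (bcons false w), cp_b n d (by omega)]
      have R : cp (n+1) (cp (n+1) (ones (d+2) (bcons false w))) = ones d (bcons false w) := by
        rw [cp_b (n+1) (d+1) (by omega), cp_b (n+1) d (by omega)]
      rw [L, R]
  · have L : cp n (xp 0 (ones (n+1+1) w)) = ones n (bcons false w) := by
      rw [hx0, show (n:ℕ)+1+1 = n+2 from rfl, X0_ones n w, cp_c n w]
    have R : cp (n+1) (cp (n+1) (ones (n+1+1) w)) = ones n (bcons false w) := by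
      rw [show (n:ℕ)+1+1 = (n+1)+1 from rfl, cp_c (n+1) w, cp_b' (n+1) (n+1) (by omega) (by omega)]
      congr 1
    rw [L, R]

lemma rel2 (k n : ℕ) (h : k < n) : xp k * cp (n+1) = cp n * xp (k+1) := by
  apply Equiv.ext; intro s
  simp only [Equiv.Perm.mul_apply]
  rcases caseSplit (n+1) s with ⟨j, w, hj, rfl⟩ | ⟨w, rfl⟩
  · rcases Nat.lt_or_ge j (k+1) with hjk | hjk
    · -- j ≤ k
      cases j with
      | zero =>
        have L : xp k (cp (n+1) (ones 0 (bcons false w))) = ones (n+1) w := by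
          rw [ones_zero, cp_a (n+1)]
          rw [show (n:ℕ)+1+1 = k+(n+2-k) from by omega, ones_add k (n+2-k)]
          rw [xp_ones k]
          obtain ⟨m, hm⟩ : ∃ m, n+2-k = m+2 := ⟨n-k, by omega⟩
          rw [hm, X0_ones m, ← ones_add]
          rw [show k+(m+1) = n+1 from by omega]
        have R : cp n (xp (k+1) (ones 0 (bcons false w))) = ones (n+1) w := by
          rw [xp_fix' (k+1) 0 (by omega), ones_zero, cp_a n]
        rw [L, R]
      | succ j =>
        have L : xp k (cp (n+1) (ones (j+1) (bcons false w))) = ones j (bcons false w) := by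
          rw [cp_b (n+1) j (by omega), xp_fix' k j (by omega)]
        have R : cp n (xp (k+1) (ones (j+1) (bcons false w))) = ones j (bcons false w) := by
          rw [xp_fix' (k+1) (j+1) (by omega), cp_b n j (by omega)]
        rw [L, R]
    · -- j ≥ k+1
      obtain ⟨d, rfl⟩ : ∃ d, j = (k+1) + d := ⟨j - (k+1), by omega⟩
      have e0 : ones (k+1+d) (bcons false w) = ones (k+1) (ones d (bcons false w)) := by
        rw [← ones_add]
      match d with
      | 0 =>
        have L : xp k (cp (n+1) (ones (k+1+0) (bcons false w)))
            = ones k (bcons false (bcons false w)) := by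
          rw [show k+1+0 = k+1 from rfl, cp_b (n+1) k (by omega)]
          rw [show ones k (bcons false w) = ones k (ones 0 (bcons false w)) from rfl]
          rw [xp_ones k, ones_zero, X0_c0]
        have R : cp n (xp (k+1) (ones (k+1+0) (bcons false w)))
            = ones k (bcons false (bcons false w)) := by
          rw [e0, xp_ones (k+1), ones_zero, X0_c0, cp_b n k (by omega)]
        rw [L, R]
      | 1 =>
        have L : xp k (cp (n+1) (ones (k+1+1) (bcons false w)))
            = ones k (bcons false (bcons true w)) := by
          rw [show k+1+1 = (k+1)+1 from rfl, cp_b (n+1) (k+1) (by omega)]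
          rw [show ones (k+1) (bcons false w) = ones k (ones 1 (bcons false w)) from by rw [← ones_add]]
          rw [xp_ones k, ones_one, X0_c1c0]
        have R : cp n (xp (k+1) (ones (k+1+1) (bcons false w)))
            = ones k (bcons false (bcons true w)) := by
          rw [e0, xp_ones (k+1), ones_one, X0_c1c0, cp_b n k (by omega)]
        rw [L, R]
      | (d+2) =>
        have L : xp k (cp (n+1) (ones (k+1+(d+2)) (bcons false w)))
            = ones (k+d+1) (bcons false w) := by
          rw [show k+1+(d+2) = (k+2+d)+1 from by omega, cp_b (n+1) (k+2+d) (by omega)]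
          rw [show k+2+d = k+(d+2) from by omega, ones_add k (d+2)]
          rw [xp_ones k, X0_ones d, ← ones_add]
          rw [show k+(d+1) = k+d+1 from by omega]
        have R : cp n (xp (k+1) (ones (k+1+(d+2)) (bcons false w)))
            = ones (k+d+1) (bcons false w) := by
          rw [show k+1+(d+2) = (k+1)+(d+2) from rfl, ones_add (k+1) (d+2)]
          rw [xp_ones (k+1), X0_ones d, ← ones_add]
          rw [show k+1+(d+1) = (k+d+1)+1 from by omega, cp_b n (k+d+1) (by omega)]
        rw [L, R]
  · -- s = ones (n+2) w
    obtain ⟨m, hm⟩ : ∃ m, n+1-k = m+2 := ⟨n-1-k, by omega⟩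
    have L : xp k (cp (n+1) (ones (n+1+1) w)) = ones n (bcons false w) := by
      rw [show (n:ℕ)+1+1 = (n+1)+1 from rfl, cp_c (n+1) w]
      rw [show (n:ℕ)+1 = k+(n+1-k) from by omega, ones_add k (n+1-k)]
      rw [xp_ones k, hm, X0_ones m, ← ones_add]
      rw [show k+(m+1) = n from by omega]
    have R : cp n (xp (k+1) (ones (n+1+1) w)) = ones n (bcons false w) := by
      rw [show (n:ℕ)+1+1 = (k+1)+(n+1-k) from by omega, ones_add (k+1) (n+1-k)]
      rw [xp_ones (k+1), hm, X0_ones m, ← ones_add]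
      rw [show k+1+(m+1) = n+1 from by omega, cp_c n w]
    rw [L, R]
/-! ### The torsion relator -/

lemma cp_orbit (n : ℕ) : ∀ j m, m ≤ n → j ≤ m → ∀ w,
    (cp n ^ j) (ones m (bcons false w)) = ones (m-j) (bcons false w) := by
  intro j
  induction j with
  | zero => intro m _ _ w; simp
  | succ j ih =>
    intro m hm hj w
    rw [pow_succ, Equiv.Perm.mul_apply, cp_b' n m (by omega) hm,
      ih (m-1) (by omega) (by omega) w, show m-1-j = m-(j+1) from by omega]

lemma rel5 (n : ℕ) : cp n ^ (n+2) = 1 := by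
  apply Equiv.ext; intro s
  rw [Equiv.Perm.one_apply]
  rcases caseSplit n s with ⟨k, w, hk, rfl⟩ | ⟨w, rfl⟩
  · rw [show (n:ℕ)+2 = (n-k)+(1+(1+k)) from by omega, pow_add, pow_add, pow_add, pow_one]
    simp only [Equiv.Perm.mul_apply]
    rw [cp_orbit n k k hk le_rfl w, show k-k = 0 from by omega, ones_zero, cp_a,
      show (n:ℕ)+1 = n+1 from rfl, cp_c, cp_orbit n (n-k) n le_rfl (by omega) w,
      show n-(n-k) = k from by omega]
  · rw [show (n:ℕ)+2 = 1+(n+1) from by omega, pow_add, pow_add, pow_one]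
    simp only [Equiv.Perm.mul_apply]
    rw [cp_c, cp_orbit n n n le_rfl le_rfl w, show n-n = 0 from by omega, ones_zero, cp_a]
/-! ### The homomorphism from Thompson's group T -/

def TGens : ℕ ⊕ ℕ → Equiv.Perm BS := Sum.elim xp cp

lemma TRel_holds : ∀ r ∈ TRel, FreeGroup.lift TGens r = 1 := by
  intro r hr
  rcases hr with ⟨i,j,hij,rfl⟩|⟨k,n,hkn,rfl⟩|⟨n,rfl⟩|⟨n,rfl⟩|⟨n,rfl⟩
  · simp only [map_mul, map_inv, FreeGroup.lift_apply_of, TGens, Sum.elim_inl, Sum.elim_inr]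
    rw [rel1 i j hij]
    group
  · simp only [map_mul, map_inv, FreeGroup.lift_apply_of, TGens, Sum.elim_inl, Sum.elim_inr]
    rw [rel2 k n hkn]
    group
  · simp only [map_mul, map_inv, map_pow, FreeGroup.lift_apply_of, TGens, Sum.elim_inl, Sum.elim_inr]
    rw [show (cp n * xp 0 : Equiv.Perm BS) = cp (n+1) ^ 2 from by rw [rel3 n, sq]]
    group
  · simp only [map_mul, map_inv, FreeGroup.lift_apply_of, TGens, Sum.elim_inl, Sum.elim_inr]
    rw [show cp (n+1) = (xp n)⁻¹ * cp n from rfl]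
    group
  · simp only [map_pow, FreeGroup.lift_apply_of, TGens, Sum.elim_inr]
    exact rel5 n

noncomputable def ρ : ThompsonT →* Equiv.Perm BS := PresentedGroup.toGroup TRel_holds

@[simp] lemma ρ_x (i : ℕ) : ρ (x i) = xp i := PresentedGroup.toGroup.of TRel_holds
@[simp] lemma ρ_c (i : ℕ) : ρ (c i) = cp i := PresentedGroup.toGroup.of TRel_holds
/-! ### The height function -/

def tailSet (s : BS) : Set ℕ := {N | ∀ k, N ≤ k → s (k+1) = s k}

noncomputable def nu (s : BS) : ℕ := sInf (tailSet s)

lemma mem_tailSet_up {M : ℕ} {s : BS} (h : M ∈ tailSet s) (b : Bool) :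
    M + 1 ∈ tailSet (bcons b s) := by
  intro k hk
  obtain ⟨k', rfl⟩ : ∃ k', k = k' + 1 := ⟨k - 1, by omega⟩
  show s (k'+1) = s k'
  exact h k' (by omega)

lemma mem_tailSet_down {M : ℕ} {b : Bool} {s : BS} (h : M ∈ tailSet (bcons b s)) :
    M ∈ tailSet s := by
  intro k hk
  have := h (k+1) (by omega)
  exact this

lemma mem_tailSet_down' {M : ℕ} {b : Bool} {s : BS} (h : M + 1 ∈ tailSet (bcons b s)) :
    M ∈ tailSet s := by
  intro k hk
  have := h (k+1) (by omega)
  exact this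

lemma tailSet_empty_iff {b : Bool} {s : BS} :
    tailSet (bcons b s) = ∅ ↔ tailSet s = ∅ := by
  constructor
  · intro h
    rw [Set.eq_empty_iff_forall_notMem] at *
    intro M hM
    exact h (M+1) (mem_tailSet_up hM b)
  · intro h
    rw [Set.eq_empty_iff_forall_notMem] at *
    intro M hM
    exact h M (mem_tailSet_down hM)

lemma nu_cons_le (b : Bool) (s : BS) : nu (bcons b s) ≤ nu s + 1 := by
  rcases Set.eq_empty_or_nonempty (tailSet s) with h | h
  · have h2 : tailSet (bcons b s) = ∅ := tailSet_empty_iff.mpr h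
    rw [nu, h2, Nat.sInf_empty]
    omega
  · exact Nat.sInf_le (mem_tailSet_up (Nat.sInf_mem h) b)

lemma nu_cons_ge (b : Bool) (s : BS) (hs : 1 ≤ nu s) : nu s + 1 ≤ nu (bcons b s) := by
  rcases Set.eq_empty_or_nonempty (tailSet (bcons b s)) with h | h
  · have h2 : tailSet s = ∅ := tailSet_empty_iff.mp h
    rw [nu, h2, Nat.sInf_empty] at hs
    omega
  · have hM := Nat.sInf_mem h
    set M := sInf (tailSet (bcons b s)) with hMdef
    rcases Nat.eq_zero_or_pos M with h0 | h1
    · rw [h0] at hM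
      exfalso
      have h00 : 0 ∈ tailSet s := by
        intro k _
        have h1 := hM (k+1) (by omega)
        exact h1
      have : nu s = 0 := Nat.le_zero.mp (Nat.sInf_le h00)
      omega
    · obtain ⟨M', hM'⟩ : ∃ M', M = M' + 1 := ⟨M - 1, by omega⟩
      rw [hM'] at hM
      have h3 : M' ∈ tailSet s := mem_tailSet_down' hM
      have h4 : nu s ≤ M' := Nat.sInf_le h3
      show nu s + 1 ≤ nu (bcons b s)
      have : nu (bcons b s) = M := hMdef.symm
      omega

lemma nu_cons_eq (b : Bool) (s : BS) (hs : 1 ≤ nu s) : nu (bcons b s) = nu s + 1 :=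
  le_antisymm (nu_cons_le b s) (nu_cons_ge b s hs)

/-- prepend a finite list -/
def app (l : List Bool) (s : BS) : BS := l.foldr bcons s

@[simp] lemma app_nil (s : BS) : app [] s = s := rfl
@[simp] lemma app_cons (b : Bool) (l : List Bool) (s : BS) :
    app (b :: l) s = bcons b (app l s) := rfl

lemma nu_app_le (l : List Bool) (s : BS) : nu (app l s) ≤ nu s + l.length := by
  induction l with
  | nil => simp
  | cons b l ih =>
    rw [app_cons]
    calc nu (bcons b (app l s)) ≤ nu (app l s) + 1 := nu_cons_le _ _
    _ ≤ nu s + (b :: l).length := by simp; omega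

lemma nu_app_eq (l : List Bool) (s : BS) (hs : 1 ≤ nu s) :
    nu (app l s) = nu s + l.length := by
  induction l with
  | nil => simp
  | cons b l ih =>
    rw [app_cons, nu_cons_eq _ _ (by omega), ih]
    simp; omega

noncomputable def hgt (s : BS) : ℕ := max (nu s) 5

lemma hgt_rewrite {a b : List Bool} (_ha : a.length ≤ 3) (hb : b.length ≤ 4)
    (hab : b.length ≤ a.length + 1) (w : BS) : hgt (app b w) ≤ hgt (app a w) + 1 := by
  rcases Nat.eq_zero_or_pos (nu w) with h0 | h1
  · have h2 : nu (app b w) ≤ 4 := by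
      have := nu_app_le b w; omega
    have : hgt (app b w) = 5 := by rw [hgt]; omega
    rw [this, hgt]
    omega
  · rw [hgt, hgt, nu_app_eq a w h1, nu_app_eq b w h1]
    omega
/-! ### Lipschitz bounds for generators -/

lemma lip_X0 (s : BS) : hgt (X0 s) ≤ hgt s + 1 := by
  obtain ⟨b, t, rfl⟩ := exists_bcons s
  cases b
  · rw [X0_c0]
    exact hgt_rewrite (a := [false]) (b := [false, false]) (by simp) (by simp) (by simp) t
  · obtain ⟨b2, t2, rfl⟩ := exists_bcons t
    cases b2
    · rw [X0_c1c0]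
      exact hgt_rewrite (a := [true, false]) (b := [false, true]) (by simp) (by simp) (by simp) t2
    · rw [X0_c1c1]
      exact hgt_rewrite (a := [true, true]) (b := [true]) (by simp) (by simp) (by simp) t2

lemma lip_X0inv (s : BS) : hgt (X0⁻¹ s) ≤ hgt s + 1 := by
  obtain ⟨b, t, rfl⟩ := exists_bcons s
  cases b
  · obtain ⟨b2, t2, rfl⟩ := exists_bcons t
    cases b2
    · rw [X0inv_c0c0]
      exact hgt_rewrite (a := [false, false]) (b := [false]) (by simp) (by simp) (by simp) t2
    · rw [X0inv_c0c1]
      exact hgt_rewrite (a := [false, true]) (b := [true, false]) (by simp) (by simp) (by simp) t2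
  · rw [X0inv_c1]
    exact hgt_rewrite (a := [true]) (b := [true, true]) (by simp) (by simp) (by simp) t

lemma lip_C0 (s : BS) : hgt (C0 s) ≤ hgt s + 1 := by
  obtain ⟨b, t, rfl⟩ := exists_bcons s
  cases b
  · rw [C0_c0]
    exact hgt_rewrite (a := [false]) (b := [true]) (by simp) (by simp) (by simp) t
  · rw [C0_c1]
    exact hgt_rewrite (a := [true]) (b := [false]) (by simp) (by simp) (by simp) t

lemma xp_one : xp 1 = liftPerm X0 := rfl

lemma lip_xp1 (s : BS) : hgt (xp 1 s) ≤ hgt s + 1 := by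
  obtain ⟨b, t, rfl⟩ := exists_bcons s
  cases b
  · rw [xp_one, liftPerm_c0]; omega
  · rw [xp_one, liftPerm_c1]
    obtain ⟨b2, t2, rfl⟩ := exists_bcons t
    cases b2
    · rw [X0_c0]
      exact hgt_rewrite (a := [true, false]) (b := [true, false, false])
        (by simp) (by simp) (by simp) t2
    · obtain ⟨b3, t3, rfl⟩ := exists_bcons t2
      cases b3
      · rw [X0_c1c0]
        exact hgt_rewrite (a := [true, true, false]) (b := [true, false, true])
          (by simp) (by simp) (by simp) t3
      · rw [X0_c1c1]
        exact hgt_rewrite (a := [true, true, true]) (b := [true, true])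
          (by simp) (by simp) (by simp) t3

lemma lip_xp1inv (s : BS) : hgt ((xp 1)⁻¹ s) ≤ hgt s + 1 := by
  have h1 : (xp 1)⁻¹ = liftPerm X0⁻¹ := by rw [xp_one, liftPerm_inv]
  obtain ⟨b, t, rfl⟩ := exists_bcons s
  cases b
  · rw [h1, liftPerm_c0]; omega
  · rw [h1, liftPerm_c1]
    obtain ⟨b2, t2, rfl⟩ := exists_bcons t
    cases b2
    · obtain ⟨b3, t3, rfl⟩ := exists_bcons t2
      cases b3
      · rw [X0inv_c0c0]
        exact hgt_rewrite (a := [true, false, false]) (b := [true, false])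
          (by simp) (by simp) (by simp) t3
      · rw [X0inv_c0c1]
        exact hgt_rewrite (a := [true, false, true]) (b := [true, true, false])
          (by simp) (by simp) (by simp) t3
    · rw [X0inv_c1]
      exact hgt_rewrite (a := [true, true]) (b := [true, true, true])
        (by simp) (by simp) (by simp) t2
/-! ### Word length lower bound machinery -/

lemma lip_gen (a : ThompsonT)
    (ha : a ∈ ({x 0, x 1, c 0} : Set ThompsonT) ∨ a⁻¹ ∈ ({x 0, x 1, c 0} : Set ThompsonT))
    (s : BS) : hgt (ρ a s) ≤ hgt s + 1 := by
  rcases ha with ha | ha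
  · rw [Set.mem_insert_iff, Set.mem_insert_iff, Set.mem_singleton_iff] at ha
    rcases ha with rfl | rfl | rfl
    · rw [ρ_x]; exact lip_X0 s
    · rw [ρ_x]; exact lip_xp1 s
    · rw [ρ_c]; exact lip_C0 s
  · rw [Set.mem_insert_iff, Set.mem_insert_iff, Set.mem_singleton_iff] at ha
    have e : ρ a = (ρ a⁻¹)⁻¹ := by rw [map_inv, inv_inv]
    rcases ha with h | h | h
    · have e2 : ρ a = (xp 0)⁻¹ := by rw [e, h, ρ_x]
      rw [e2]; exact lip_X0inv s
    · have e2 : ρ a = (xp 1)⁻¹ := by rw [e, h, ρ_x]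
      rw [e2]; exact lip_xp1inv s
    · have e2 : ρ a = (cp 0)⁻¹ := by rw [e, h, ρ_c]
      rw [e2]; exact lip_C0 s

lemma lip_word (l : List ThompsonT)
    (hl : ∀ a ∈ l, a ∈ ({x 0, x 1, c 0} : Set ThompsonT) ∨ a⁻¹ ∈ ({x 0, x 1, c 0} : Set ThompsonT))
    (s : BS) : hgt (ρ l.prod s) ≤ hgt s + l.length := by
  induction l generalizing s with
  | nil => simp
  | cons a t ih =>
    rw [List.prod_cons, map_mul, Equiv.Perm.mul_apply]
    calc hgt (ρ a (ρ t.prod s)) ≤ hgt (ρ t.prod s) + 1 :=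
          lip_gen a (hl a List.mem_cons_self) _
    _ ≤ hgt s + t.length + 1 := by
          have := ih (fun b hb => hl b (List.mem_cons_of_mem a hb)) s
          omega
    _ = hgt s + (a :: t).length := by simp; omega

/-! ### Base point computations -/

def zs : BS := fun _ => false

lemma nu_zs : nu zs = 0 :=
  Nat.sInf_eq_zero.mpr (Or.inl (fun _ _ => rfl))

lemma mem_tailSet_c1zs : (1 : ℕ) ∈ tailSet (bcons true zs) := by
  intro k hk
  obtain ⟨k', rfl⟩ : ∃ k', k = k' + 1 := ⟨k - 1, by omega⟩
  rfl

lemma nu_c1zs : nu (bcons true zs) = 1 := by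
  apply le_antisymm (Nat.sInf_le mem_tailSet_c1zs)
  by_contra hlt
  have h0 : nu (bcons true zs) = 0 := Nat.lt_one_iff.mp (Nat.not_le.mp hlt)
  rcases Nat.sInf_eq_zero.mp h0 with h | h
  · exact Bool.noConfusion (h 0 (le_refl 0) : (false : Bool) = true)
  · rw [Set.eq_empty_iff_forall_notMem] at h
    exact h 1 mem_tailSet_c1zs

lemma nu_ones_eq (k : ℕ) (w : BS) (hw : 1 ≤ nu w) : nu (ones k w) = nu w + k := by
  induction k with
  | zero => simp
  | succ k ih => rw [ones_succ, nu_cons_eq _ _ (by omega), ih]; omega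

lemma nu_ones_zs (k : ℕ) : nu (ones k zs) = k := by
  cases k with
  | zero => exact nu_zs
  | succ k =>
    rw [show k+1 = k+1 from rfl, ones_add k 1,
      nu_ones_eq k (ones 1 zs) (by rw [show ones 1 zs = bcons true zs from rfl, nu_c1zs]),
      show ones 1 zs = bcons true zs from rfl, nu_c1zs]
    omega

lemma X0_pow (j m : ℕ) (w : BS) : (X0 ^ j) (ones (j + (m+2)) w) = ones (m+2) w := by
  induction j with
  | zero => simp
  | succ j ih =>
    rw [pow_succ, Equiv.Perm.mul_apply,
      show j+1+(m+2) = (j+m+1)+2 from by omega, X0_ones (j+m+1) w,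
      show j+m+1+1 = j+(m+2) from by omega, ih]

/-! ### Core lower bounds -/

lemma core_lower_x0 (n : ℕ) (l : List ThompsonT)
    (hm : ∀ a ∈ l, a ∈ ({x 0, x 1, c 0} : Set ThompsonT) ∨ a⁻¹ ∈ ({x 0, x 1, c 0} : Set ThompsonT))
    (hp : l.prod = x 0 ^ n) : n ≤ l.length := by
  set l' := (l.map Inv.inv).reverse with hl'
  have hm' : ∀ a ∈ l', a ∈ ({x 0, x 1, c 0} : Set ThompsonT) ∨
      a⁻¹ ∈ ({x 0, x 1, c 0} : Set ThompsonT) := by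
    intro a ha
    rw [hl', List.mem_reverse, List.mem_map] at ha
    obtain ⟨b, hb, rfl⟩ := ha
    rcases hm b hb with h | h
    · right; rw [inv_inv]; exact h
    · left; exact h
  have hp' : l'.prod = (x 0 ^ n)⁻¹ := by rw [← hp]; exact (List.prod_inv_reverse l).symm
  have hlen : l'.length = l.length := by simp [hl']
  set p : BS := ones (n+6) zs with hpdef
  have h1 : ρ (x 0 ^ n) p = ones 6 zs := by
    rw [map_pow, ρ_x, hpdef, show xp 0 = X0 from rfl,
      show n+6 = n+(4+2) from by omega, X0_pow n 4 zs]
  have h2 := lip_word l' hm' (ρ (x 0 ^ n) p)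
  rw [hp'] at h2
  have h3 : ρ ((x 0 ^ n)⁻¹) (ρ (x 0 ^ n) p) = p := by
    rw [map_inv]; exact Equiv.symm_apply_apply (ρ (x 0 ^ n)) p
  rw [h3, h1] at h2
  have hhp : hgt p = n + 6 := by
    rw [hpdef, hgt, nu_ones_zs]; omega
  have hh6 : hgt (ones 6 zs) = 6 := by rw [hgt, nu_ones_zs]; omega
  rw [hhp, hh6, hlen] at h2
  omega

lemma core_lower_x1 (n : ℕ) (l : List ThompsonT)
    (hm : ∀ a ∈ l, a ∈ ({x 0, x 1, c 0} : Set ThompsonT) ∨ a⁻¹ ∈ ({x 0, x 1, c 0} : Set ThompsonT))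
    (hp : l.prod = x 1 ^ n) : n ≤ l.length := by
  set l' := (l.map Inv.inv).reverse with hl'
  have hm' : ∀ a ∈ l', a ∈ ({x 0, x 1, c 0} : Set ThompsonT) ∨
      a⁻¹ ∈ ({x 0, x 1, c 0} : Set ThompsonT) := by
    intro a ha
    rw [hl', List.mem_reverse, List.mem_map] at ha
    obtain ⟨b, hb, rfl⟩ := ha
    rcases hm b hb with h | h
    · right; rw [inv_inv]; exact h
    · left; exact h
  have hp' : l'.prod = (x 1 ^ n)⁻¹ := by rw [← hp]; exact (List.prod_inv_reverse l).symm
  have hlen : l'.length = l.length := by simp [hl']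
  set p : BS := ones (n+7) zs with hpdef
  have h1 : ρ (x 1 ^ n) p = ones 7 zs := by
    rw [map_pow, ρ_x, hpdef, xp_one, liftPerm_pow,
      show n+7 = (n+6)+1 from by omega, ones_succ, liftPerm_c1,
      show n+6 = n+(4+2) from by omega, X0_pow n 4 zs]
    rfl
  have h2 := lip_word l' hm' (ρ (x 1 ^ n) p)
  rw [hp'] at h2
  have h3 : ρ ((x 1 ^ n)⁻¹) (ρ (x 1 ^ n) p) = p := by
    rw [map_inv]; exact Equiv.symm_apply_apply (ρ (x 1 ^ n)) p
  rw [h3, h1] at h2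
  have hhp : hgt p = n + 7 := by
    rw [hpdef, hgt, nu_ones_zs]; omega
  have hh7 : hgt (ones 7 zs) = 7 := by rw [hgt, nu_ones_zs]; omega
  rw [hhp, hh7, hlen] at h2
  omega
/-! ### Word length: final assembly -/

lemma repl_mem {G : Type*} [Group G] (S : Set G) (g : G) (hg : g ∈ S) (n : ℕ) :
    n ∈ {m : ℕ | ∃ w : List G, w.length = m ∧ (∀ a ∈ w, a ∈ S ∨ a⁻¹ ∈ S) ∧ w.prod = g ^ n} :=
  ⟨List.replicate n g, by simp,
    fun a ha => Or.inl (by rw [List.eq_of_mem_replicate ha]; exact hg),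
    List.prod_replicate n g⟩

lemma wl_upper {G : Type*} [Group G] (S : Set G) (g : G) (hg : g ∈ S) (n : ℕ) :
    wordLength S (g ^ n) ≤ n :=
  Nat.sInf_le (repl_mem S g hg n)

lemma hx0T (n : ℕ) : wordLength ({x 0, x 1, c 0} : Set ThompsonT) (x 0 ^ n) = n := by
  apply le_antisymm (wl_upper _ _ (Set.mem_insert _ _) n)
  apply le_csInf ⟨n, repl_mem _ _ (Set.mem_insert _ _) n⟩
  rintro m ⟨w, rfl, hmem, hprod⟩
  exact core_lower_x0 n w hmem hprod

lemma hx1T (n : ℕ) : wordLength ({x 0, x 1, c 0} : Set ThompsonT) (x 1 ^ n) = n := by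
  have hmem1 : x 1 ∈ ({x 0, x 1, c 0} : Set ThompsonT) := by right; left; rfl
  apply le_antisymm (wl_upper _ _ hmem1 n)
  apply le_csInf ⟨n, repl_mem _ _ hmem1 n⟩
  rintro m ⟨w, rfl, hmem, hprod⟩
  exact core_lower_x1 n w hmem hprod

lemma transfer_mem (φ : ThompsonF →* ThompsonT) (hφ : ∀ i, φ (xF i) = x i)
    (w : List ThompsonF)
    (hmem : ∀ a ∈ w, a ∈ ({xF 0, xF 1} : Set ThompsonF) ∨ a⁻¹ ∈ ({xF 0, xF 1} : Set ThompsonF)) :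
    ∀ a ∈ w.map φ, a ∈ ({x 0, x 1, c 0} : Set ThompsonT) ∨
      a⁻¹ ∈ ({x 0, x 1, c 0} : Set ThompsonT) := by
  intro a ha
  rw [List.mem_map] at ha
  obtain ⟨b, hb, rfl⟩ := ha
  rcases hmem b hb with h | h
  · rw [Set.mem_insert_iff, Set.mem_singleton_iff] at h
    rcases h with rfl | rfl
    · left; rw [hφ 0]; exact Set.mem_insert _ _
    · left; rw [hφ 1]; right; left; rfl
  · rw [Set.mem_insert_iff, Set.mem_singleton_iff] at h
    rcases h with h | h
    · right; rw [← map_inv, h, hφ 0]; exact Set.mem_insert _ _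
    · right; rw [← map_inv, h, hφ 1]; right; left; rfl

lemma hx0F (φ : ThompsonF →* ThompsonT) (hφ : ∀ i, φ (xF i) = x i) (n : ℕ) :
    wordLength ({xF 0, xF 1} : Set ThompsonF) (xF 0 ^ n) = n := by
  apply le_antisymm (wl_upper _ _ (Set.mem_insert _ _) n)
  apply le_csInf ⟨n, repl_mem _ _ (Set.mem_insert _ _) n⟩
  rintro m ⟨w, rfl, hmem, hprod⟩
  have hprod' : (w.map φ).prod = x 0 ^ n := by
    rw [← map_list_prod φ w, hprod, map_pow, hφ 0]
  have := core_lower_x0 n (w.map φ) (transfer_mem φ hφ w hmem) hprod'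
  simpa using this

lemma hx1F (φ : ThompsonF →* ThompsonT) (hφ : ∀ i, φ (xF i) = x i) (n : ℕ) :
    wordLength ({xF 0, xF 1} : Set ThompsonF) (xF 1 ^ n) = n := by
  have hmem1 : xF 1 ∈ ({xF 0, xF 1} : Set ThompsonF) := by right; rfl
  apply le_antisymm (wl_upper _ _ hmem1 n)
  apply le_csInf ⟨n, repl_mem _ _ hmem1 n⟩
  rintro m ⟨w, rfl, hmem, hprod⟩
  have hprod' : (w.map φ).prod = x 1 ^ n := by
    rw [← map_list_prod φ w, hprod, map_pow, hφ 1]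
  have := core_lower_x1 n (w.map φ) (transfer_mem φ hφ w hmem) hprod'
  simpa using this


/-- The elements `x_0^n` and `x_1^n` have word length `n` both in `F` (with respect
to `{x_0, x_1}`) and in `T` (with respect to `{x_0, x_1, c_0}`). -/
theorem wordLength_powers_of_generators (φ : ThompsonF →* ThompsonT)
    (hφ : ∀ i, φ (xF i) = x i) (n : ℕ) :
    wordLength ({xF 0, xF 1} : Set ThompsonF) (xF 0 ^ n) = n ∧
    wordLength ({xF 0, xF 1} : Set ThompsonF) (xF 1 ^ n) = n ∧
    wordLength ({x 0, x 1, c 0} : Set ThompsonT) (φ (xF 0) ^ n) = n ∧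
    wordLength ({x 0, x 1, c 0} : Set ThompsonT) (φ (xF 1) ^ n) = n := by
  refine ⟨hx0F φ hφ n, hx1F φ hφ n, ?_, ?_⟩
  · rw [hφ 0]; exact hx0T n
  · rw [hφ 1]; exact hx1T n
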